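/- Let L be a first-order language, let n ≥ 1, and let A ⊆ B ⊆ C be a chain of substructures of an L-structure. Suppose that A is a Σ_{n−1}-elementary substructure of B, that B is a Σ_{n−1}-elementary substructure of C, and that A is a fully elementary substructure of C. Then A is a Σ_n-elementary substructure of B. -/

import Mathlib

open FirstOrder FirstOrder.Language

universe u v w

mutual
  /-- `IsSigmaFml k φ` : `φ` is a `Σ_k` formula, i.e. a prenex formula consisting of at
  most `k` alternating blocks of quantifiers (possibly empty) beginning with an
  existential block, followed by a quantifier-free matrix. -/
  inductive IsSigmaFml {L : FirstOrder.Language.{u, v}} {α : Type w} :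
      ℕ → ∀ {n : ℕ}, L.BoundedFormula α n → Prop
    | of_isQF {k n : ℕ} {φ : L.BoundedFormula α n} (h : φ.IsQF) : IsSigmaFml k φ
    | of_isPi {k n : ℕ} {φ : L.BoundedFormula α n} (h : IsPiFml k φ) : IsSigmaFml (k + 1) φ
    | ex {k n : ℕ} {φ : L.BoundedFormula α (n + 1)} (h : IsSigmaFml (k + 1) φ) :
        IsSigmaFml (k + 1) φ.ex

  /-- `IsPiFml k φ` : `φ` is a `Π_k` formula, i.e. a prenex formula consisting of at
  most `k` alternating blocks of quantifiers (possibly empty) beginning with a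
  universal block, followed by a quantifier-free matrix. -/
  inductive IsPiFml {L : FirstOrder.Language.{u, v}} {α : Type w} :
      ℕ → ∀ {n : ℕ}, L.BoundedFormula α n → Prop
    | of_isQF {k n : ℕ} {φ : L.BoundedFormula α n} (h : φ.IsQF) : IsPiFml k φ
    | of_isSigma {k n : ℕ} {φ : L.BoundedFormula α n} (h : IsSigmaFml k φ) : IsPiFml (k + 1) φ
    | all {k n : ℕ} {φ : L.BoundedFormula α (n + 1)} (h : IsPiFml (k + 1) φ) :
        IsPiFml (k + 1) φ.all
end

/-- `A` is a `Σ_k`-elementary substructure of `B` (both substructures of the ambient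
`L`-structure `M`, with `A ≤ B`): every `Σ_k` formula with parameters from `A` holds
in `A` if and only if it holds in `B`. -/
def IsSigmaElementary {L : FirstOrder.Language.{u, v}} {M : Type w} [L.Structure M]
    (k : ℕ) (A B : L.Substructure M) (hAB : A ≤ B) : Prop :=
  ∀ {m : ℕ} (φ : L.Formula (Fin m)), IsSigmaFml k φ → ∀ v : Fin m → A,
    (φ.Realize v ↔ φ.Realize fun i => (⟨(v i : M), hAB (v i).2⟩ : B))

/-- `A` is a fully elementary substructure of `B`: every first-order formula with
parameters from `A` holds in `A` if and only if it holds in `B`. -/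
def IsFullyElementary {L : FirstOrder.Language.{u, v}} {M : Type w} [L.Structure M]
    (A B : L.Substructure M) (hAB : A ≤ B) : Prop :=
  ∀ {m : ℕ} (φ : L.Formula (Fin m)), ∀ v : Fin m → A,
    (φ.Realize v ↔ φ.Realize fun i => (⟨(v i : M), hAB (v i).2⟩ : B))

namespace ThreeModel
open FirstOrder.Language BoundedFormula
variable {L : FirstOrder.Language.{u, v}} {α β : Type w}

theorem sigmaRelabel {m : ℕ} (g : α → β ⊕ Fin m) :
    ∀ {k n : ℕ} {φ : L.BoundedFormula α n}, IsSigmaFml k φ → IsSigmaFml k (φ.relabel g) :=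
  fun h =>
  @IsSigmaFml.rec L α (fun k _ φ _ => IsSigmaFml k (φ.relabel g))
    (fun k _ φ _ => IsPiFml k (φ.relabel g))
    (fun {_ _ _} hq => .of_isQF (hq.relabel g))
    (fun {_ _ _} _ ih => .of_isPi ih)
    (fun {_ _ _} _ ih => by rw [relabel_ex]; exact .ex ih)
    (fun {_ _ _} hq => .of_isQF (hq.relabel g))
    (fun {_ _ _} _ ih => .of_isSigma ih)
    (fun {_ _ _} _ ih => by rw [relabel_all]; exact .all ih)
    _ _ _ h

theorem piRelabel {m : ℕ} (g : α → β ⊕ Fin m) :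
    ∀ {k n : ℕ} {φ : L.BoundedFormula α n}, IsPiFml k φ → IsPiFml k (φ.relabel g) :=
  fun h =>
  @IsPiFml.rec L α (fun k _ φ _ => IsSigmaFml k (φ.relabel g))
    (fun k _ φ _ => IsPiFml k (φ.relabel g))
    (fun {_ _ _} hq => .of_isQF (hq.relabel g))
    (fun {_ _ _} _ ih => .of_isPi ih)
    (fun {_ _ _} _ ih => by rw [relabel_ex]; exact .ex ih)
    (fun {_ _ _} hq => .of_isQF (hq.relabel g))
    (fun {_ _ _} _ ih => .of_isSigma ih)
    (fun {_ _ _} _ ih => by rw [relabel_all]; exact .all ih)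
    _ _ _ h

theorem toFormula_ex {n : ℕ} (φ : L.BoundedFormula α (n + 1)) :
    φ.ex.toFormula = (BoundedFormula.relabel
      (Sum.elim (Sum.inl ∘ Sum.inl) (Sum.map Sum.inr id ∘ finSumFinEquiv.symm)) φ.toFormula).ex := by
  simp only [BoundedFormula.ex, BoundedFormula.not, toFormula, relabel_not]
  rfl


theorem isQF_toFormula {n : ℕ} {φ : L.BoundedFormula α n} (h : φ.IsQF) : φ.toFormula.IsQF := by
  induction h with
  | falsum => exact .falsum
  | of_isAtomic h =>
    cases h with
    | equal t₁ t₂ => exact (BoundedFormula.IsAtomic.equal _ _).isQF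
    | rel R ts => exact (BoundedFormula.IsAtomic.rel _ _).isQF
  | imp _ _ ih₁ ih₂ => exact ih₁.imp ih₂

theorem sigmaToFormula :
    ∀ {k n : ℕ} {φ : L.BoundedFormula α n}, IsSigmaFml k φ → IsSigmaFml k φ.toFormula :=
  fun h =>
  @IsSigmaFml.rec L α (fun k _ φ _ => IsSigmaFml k φ.toFormula)
    (fun k _ φ _ => IsPiFml k φ.toFormula)
    (fun {_ _ _} hq => .of_isQF (isQF_toFormula hq))
    (fun {_ _ _} _ ih => .of_isPi ih)
    (fun {_ _ _} _ ih => by rw [toFormula_ex]; exact .ex (sigmaRelabel _ ih))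
    (fun {_ _ _} hq => .of_isQF (isQF_toFormula hq))
    (fun {_ _ _} _ ih => .of_isSigma ih)
    (fun {_ _ _} _ ih => by
      rw [show (BoundedFormula.all _).toFormula = _ from rfl]
      exact .all (piRelabel _ ih))
    _ _ _ h


theorem sigmaNeg :
    ∀ {k n : ℕ} {φ : L.BoundedFormula α n}, IsSigmaFml k φ →
      ∃ σ : L.BoundedFormula α n, IsPiFml k σ ∧
        ∀ (N : Type x) [L.Structure N] (v : α → N) (xs : Fin n → N),
          σ.Realize v xs ↔ ¬ φ.Realize v xs :=
  fun h =>
  @IsSigmaFml.rec L α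
    (fun k n φ _ => ∃ σ : L.BoundedFormula α n, IsPiFml k σ ∧
      ∀ (N : Type x) [L.Structure N] (v : α → N) (xs : Fin n → N),
        σ.Realize v xs ↔ ¬ φ.Realize v xs)
    (fun k n φ _ => ∃ σ : L.BoundedFormula α n, IsSigmaFml k σ ∧
      ∀ (N : Type x) [L.Structure N] (v : α → N) (xs : Fin n → N),
        σ.Realize v xs ↔ ¬ φ.Realize v xs)
    (fun {_ _ φ} hq => ⟨φ.not, .of_isQF hq.not, fun N _ v xs => by simp⟩)
    (fun {_ _ _} _ ih => by
      obtain ⟨σ, hσ, hr⟩ := ih; exact ⟨σ, .of_isSigma hσ, hr⟩)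
    (fun {_ _ ψ} _ ih => by
      obtain ⟨σ, hσ, hr⟩ := ih
      refine ⟨σ.all, .all hσ, fun N _ v xs => ?_⟩
      simp only [BoundedFormula.realize_all, BoundedFormula.realize_ex, hr, not_exists])
    (fun {_ _ φ} hq => ⟨φ.not, .of_isQF hq.not, fun N _ v xs => by simp⟩)
    (fun {_ _ _} _ ih => by
      obtain ⟨σ, hσ, hr⟩ := ih; exact ⟨σ, .of_isPi hσ, hr⟩)
    (fun {_ _ ψ} _ ih => by
      obtain ⟨σ, hσ, hr⟩ := ih
      refine ⟨σ.ex, .ex hσ, fun N _ v xs => ?_⟩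
      simp only [BoundedFormula.realize_all, BoundedFormula.realize_ex, hr, not_forall,
        Classical.not_not])
    _ _ _ h

theorem piNeg :
    ∀ {k n : ℕ} {φ : L.BoundedFormula α n}, IsPiFml k φ →
      ∃ σ : L.BoundedFormula α n, IsSigmaFml k σ ∧
        ∀ (N : Type x) [L.Structure N] (v : α → N) (xs : Fin n → N),
          σ.Realize v xs ↔ ¬ φ.Realize v xs :=
  fun h =>
  @IsPiFml.rec L α
    (fun k n φ _ => ∃ σ : L.BoundedFormula α n, IsPiFml k σ ∧
      ∀ (N : Type x) [L.Structure N] (v : α → N) (xs : Fin n → N),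
        σ.Realize v xs ↔ ¬ φ.Realize v xs)
    (fun k n φ _ => ∃ σ : L.BoundedFormula α n, IsSigmaFml k σ ∧
      ∀ (N : Type x) [L.Structure N] (v : α → N) (xs : Fin n → N),
        σ.Realize v xs ↔ ¬ φ.Realize v xs)
    (fun {_ _ φ} hq => ⟨φ.not, .of_isQF hq.not, fun N _ v xs => by simp⟩)
    (fun {_ _ _} _ ih => by
      obtain ⟨σ, hσ, hr⟩ := ih; exact ⟨σ, .of_isSigma hσ, hr⟩)
    (fun {_ _ ψ} _ ih => by
      obtain ⟨σ, hσ, hr⟩ := ih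
      refine ⟨σ.all, .all hσ, fun N _ v xs => ?_⟩
      simp only [BoundedFormula.realize_all, BoundedFormula.realize_ex, hr, not_exists])
    (fun {_ _ φ} hq => ⟨φ.not, .of_isQF hq.not, fun N _ v xs => by simp⟩)
    (fun {_ _ _} _ ih => by
      obtain ⟨σ, hσ, hr⟩ := ih; exact ⟨σ, .of_isPi hσ, hr⟩)
    (fun {_ _ ψ} _ ih => by
      obtain ⟨σ, hσ, hr⟩ := ih
      refine ⟨σ.ex, .ex hσ, fun N _ v xs => ?_⟩
      simp only [BoundedFormula.realize_all, BoundedFormula.realize_ex, hr, not_forall,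
        Classical.not_not])
    _ _ _ h


variable {M : Type w} [L.Structure M]

/-- inclusion map between substructures -/
def incl {A B : L.Substructure M} (hAB : A ≤ B) : A → B := fun a => ⟨(a : M), hAB a.2⟩

theorem realize_aux {N : Type w} [L.Structure N] {m l : ℕ} (φ : L.BoundedFormula (Fin m) l)
    (v : Fin m → N) (xs : Fin l → N) :
    (φ.toFormula.relabel (finSumFinEquiv : Fin m ⊕ Fin l ≃ Fin (m + l)) : L.Formula (Fin (m + l))).Realize
      (fun i => Sum.elim v xs (finSumFinEquiv.symm i)) ↔ φ.Realize v xs := by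
  rw [Formula.realize_relabel, BoundedFormula.realize_toFormula]
  simp [Function.comp_def]

theorem sigmaTransfer {k : ℕ} {A B : L.Substructure M} {hAB : A ≤ B}
    (h : IsSigmaElementary k A B hAB) {m l : ℕ} {φ : L.BoundedFormula (Fin m) l}
    (hφ : IsSigmaFml k φ) (v : Fin m → A) (xs : Fin l → A) :
    φ.Realize v xs ↔ φ.Realize (incl hAB ∘ v) (incl hAB ∘ xs) := by
  set ψ : L.Formula (Fin (m + l)) :=
    φ.toFormula.relabel (finSumFinEquiv : Fin m ⊕ Fin l ≃ Fin (m + l)) with hψdef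
  have hψ : IsSigmaFml k ψ := sigmaRelabel _ (sigmaToFormula hφ)
  have key := h ψ hψ (fun i => Sum.elim v xs (finSumFinEquiv.symm i))
  rw [realize_aux] at key
  have e : (fun i => (⟨((Sum.elim v xs (finSumFinEquiv.symm i) : A) : M),
        hAB (Sum.elim v xs (finSumFinEquiv.symm i)).2⟩ : B)) =
      fun i => Sum.elim (incl hAB ∘ v) (incl hAB ∘ xs) (finSumFinEquiv.symm i) := by
    funext i
    rcases finSumFinEquiv.symm i with j | j <;> rfl
  rw [e, realize_aux] at key
  exact key

theorem piTransfer {k : ℕ} {A B : L.Substructure M} {hAB : A ≤ B}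
    (h : IsSigmaElementary k A B hAB) {m l : ℕ} {φ : L.BoundedFormula (Fin m) l}
    (hφ : IsPiFml k φ) (v : Fin m → A) (xs : Fin l → A) :
    φ.Realize v xs ↔ φ.Realize (incl hAB ∘ v) (incl hAB ∘ xs) := by
  obtain ⟨σ, hσ, hr⟩ := piNeg.{u, v, 0, w} hφ
  have hA := hr A v xs
  have hB := hr B (incl hAB ∘ v) (incl hAB ∘ xs)
  have ht := sigmaTransfer (hAB := hAB) h hσ v xs
  tauto

theorem sigmaUpward {k : ℕ} {A B : L.Substructure M} {hAB : A ≤ B}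
    (h : IsSigmaElementary k A B hAB) :
    ∀ {j m l : ℕ} {φ : L.BoundedFormula (Fin m) l}, IsSigmaFml j φ → j = k + 1 →
      ∀ (v : Fin m → A) (xs : Fin l → A),
        φ.Realize v xs → φ.Realize (incl hAB ∘ v) (incl hAB ∘ xs) :=
  fun {j m l φ} hφ =>
  @IsSigmaFml.rec L (Fin m)
    (fun j _ φ _ => j = k + 1 → ∀ v xs, φ.Realize v xs →
      φ.Realize (incl hAB ∘ v) (incl hAB ∘ xs))
    (fun _ _ _ _ => True)
    (fun {_ _ _} hq _ v xs hr => (sigmaTransfer (hAB := hAB) h (.of_isQF hq) v xs).mp hr)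
    (fun {_ _ _} hpi _ he v xs hr => by
      cases Nat.succ_injective he
      exact (piTransfer (hAB := hAB) h hpi v xs).mp hr)
    (fun {_ _ _} _ ih he v xs hr => by
      rw [BoundedFormula.realize_ex] at hr ⊢
      obtain ⟨a, ha⟩ := hr
      refine ⟨incl hAB a, ?_⟩
      have := ih he v (Fin.snoc xs a) ha
      rwa [Fin.comp_snoc] at this)
    (fun {_ _ _} _ => trivial)
    (fun {_ _ _} _ _ => trivial)
    (fun {_ _ _} _ _ => trivial)
    _ _ _ hφ

end ThreeModel


/-- The three-model lemma at the core of the paper's main absoluteness theorem: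
if `A ⊆ B ⊆ C` is a chain of substructures with `A ≺_{n-1} B`, `B ≺_{n-1} C` and
`A ≺ C` fully elementary, then `A ≺_n B`. -/
theorem isSigmaElementary_of_chain {L : FirstOrder.Language.{u, v}} {M : Type w}
    [L.Structure M] (n : ℕ) (hn : 1 ≤ n) (A B C : L.Substructure M)
    (hAB : A ≤ B) (hBC : B ≤ C)
    (h₁ : IsSigmaElementary (n - 1) A B hAB)
    (h₂ : IsSigmaElementary (n - 1) B C hBC)
    (h₃ : IsFullyElementary A C (hAB.trans hBC)) :
    IsSigmaElementary n A B hAB := by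
  obtain ⟨k, rfl⟩ : ∃ k, n = k + 1 := ⟨n - 1, (Nat.succ_pred_eq_of_pos hn).symm⟩
  simp only [Nat.add_sub_cancel] at h₁ h₂
  intro m φ hφ v
  have edef : ∀ (X Y : L.Substructure M) (hXY : X ≤ Y),
      (ThreeModel.incl hXY ∘ (default : Fin 0 → X)) = (default : Fin 0 → Y) := by
    intro X Y hXY; funext i; exact i.elim0
  constructor
  · intro hA
    have hr := ThreeModel.sigmaUpward (hAB := hAB) h₁ hφ rfl v default hA
    rw [edef A B hAB] at hr
    exact hr
  · intro hB
    have hC := ThreeModel.sigmaUpward (hAB := hBC) h₂ hφ rfl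
      (ThreeModel.incl hAB ∘ v) default hB
    rw [edef B C hBC] at hC
    exact (h₃ φ v).mpr hC
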